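/- Let (θ_k, r_{k,i}) be the element-wise AEGD iterates with effective step sizes η_{ij} := η r_{j+1,i}/g(θ_j). Suppose f is L-smooth, has a minimizer θ* with minimum value f(θ*), and satisfies the Polyak–Łojasiewicz inequality with constant μ > 0. If η_{ij} ≤ 1/L for all i ∈ {1,…,n} and all j with k₀ ≤ j ≤ k (for some k₀ ≥ 0), then f(θ_k) − f(θ*) ≤ exp(−c₀ (k − k₀) min_i r_{k,i}) · (f(θ_{k₀}) − f(θ*)), where c₀ := μη/√(f(θ_{k₀})+c). -/

import Mathlib

open Filter Topology Finset

variable {E : Type*} [NormedAddCommGroup E] [InnerProductSpace ℝ E] [CompleteSpace E]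

lemma grad_sqrt (f : E → ℝ) (hf : Differentiable ℝ f) (c : ℝ) (x : E) (hx : 0 < f x + c) :
    HasGradientAt (fun y => Real.sqrt (f y + c)) ((2 * Real.sqrt (f x + c))⁻¹ • gradient f x) x := by
  have h1 : HasFDerivAt (fun y => f y + c) ((InnerProductSpace.toDual ℝ E) (gradient f x)) x := by
    simpa using ((hf x).hasGradientAt.hasFDerivAt.add_const c)
  have h2 := (Real.hasDerivAt_sqrt (ne_of_gt hx)).comp_hasFDerivAt x h1
  rw [hasGradientAt_iff_hasFDerivAt, map_smul]
  simpa [one_div, Function.comp_def] using h2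

lemma descent_lemma (f : E → ℝ) (hf : Differentiable ℝ f) (L : ℝ) (hL : 0 ≤ L)
    (hLip : ∀ u v, ‖gradient f u - gradient f v‖ ≤ L * ‖u - v‖) (x y : E) :
    f y ≤ f x + inner ℝ (gradient f x) (y - x) + L / 2 * ‖y - x‖ ^ 2 := by
  set d := y - x with hd
  set a : ℝ := inner ℝ (gradient f x) d with ha
  set b : ℝ := ‖d‖ ^ 2 with hb
  set ψ : ℝ → ℝ := fun t => f (x + t • d) - t * a - L / 2 * t ^ 2 * b with hψdef
  have hψ : ∀ t : ℝ, HasDerivAt ψ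
      ((inner ℝ (gradient f (x + t • d)) d : ℝ) - a - L * t * b) t := by
    intro t
    have hline : HasDerivAt (fun t : ℝ => x + t • d) d t := by
      simpa using ((hasDerivAt_id t).smul_const d).const_add x
    have h1 : HasDerivAt (fun t : ℝ => f (x + t • d))
        ((inner ℝ (gradient f (x + t • d)) d : ℝ)) t := by
      have := ((hf _).hasGradientAt.hasFDerivAt).comp_hasDerivAt t hline
      simpa [InnerProductSpace.toDual_apply_apply, Function.comp_def] using this
    have h2 : HasDerivAt (fun t : ℝ => t * a) a t := by
      simpa using (hasDerivAt_id t).mul_const a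
    have h3 : HasDerivAt (fun t : ℝ => L / 2 * t ^ 2 * b) (L * t * b) t := by
      have := (((hasDerivAt_pow 2 t).const_mul (L / 2)).mul_const b)
      rw [show L / 2 * (((2:ℕ):ℝ) * t ^ (2 - 1)) * b = L * t * b by push_cast; ring] at this
      exact this
    exact (h1.sub h2).sub h3
  have hanti : AntitoneOn ψ (Set.Icc (0:ℝ) 1) := by
    apply antitoneOn_of_deriv_nonpos (convex_Icc 0 1)
    · exact (Differentiable.continuous (fun t => (hψ t).differentiableAt)).continuousOn
    · exact (Differentiable.differentiableOn (fun t => (hψ t).differentiableAt))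
    · intro t ht
      rw [interior_Icc] at ht
      rw [(hψ t).deriv]
      have key : (inner ℝ (gradient f (x + t • d)) d : ℝ) - a ≤ L * t * b := by
        have h1 : (inner ℝ (gradient f (x + t • d)) d : ℝ) - a
            = inner ℝ (gradient f (x + t • d) - gradient f x) d := by
          rw [inner_sub_left]
        rw [h1]
        calc (inner ℝ (gradient f (x + t • d) - gradient f x) d : ℝ)
            ≤ ‖gradient f (x + t • d) - gradient f x‖ * ‖d‖ := real_inner_le_norm _ _
          _ ≤ (L * ‖x + t • d - x‖) * ‖d‖ := by
              exact mul_le_mul_of_nonneg_right (hLip _ _) (norm_nonneg _)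
          _ = L * t * b := by
              rw [add_sub_cancel_left, norm_smul, Real.norm_eq_abs,
                abs_of_pos ht.1, hb]
              ring
      linarith
  have h01 := hanti (Set.mem_Icc.2 ⟨le_refl 0, zero_le_one⟩)
    (Set.mem_Icc.2 ⟨zero_le_one, le_refl 1⟩) zero_le_one
  simp only [hψdef, zero_smul, one_smul, add_zero, zero_mul, one_mul] at h01
  have hy : x + d = y := by rw [hd]; abel
  rw [hy] at h01
  nlinarith [h01]


/-- For the element-wise AEGD iterates, if `f` is `L`-smooth, has
minimizer `θ*`, satisfies the PL inequality with constant `μ > 0`, and the effective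
step sizes satisfy `η_{ij} ≤ 1/L` for all `i` and all `k₀ ≤ j ≤ k`, then
`f(θ_k) − f(θ*) ≤ exp(−c₀ (k − k₀) min_i r_{k,i}) (f(θ_{k₀}) − f(θ*))` with
`c₀ := μη/√(f(θ_{k₀})+c)`. -/
theorem aegd_elementwise_pl_rate {n : ℕ} (hn : 0 < n)
    (f : EuclideanSpace ℝ (Fin n) → ℝ)
    (hf : Differentiable ℝ f) (hbdd : ∃ B : ℝ, ∀ x, B ≤ f x)
    (c : ℝ) (hc : 0 < c) (hfc : ∀ x, 0 < f x + c)
    (g : EuclideanSpace ℝ (Fin n) → ℝ) (hg : g = fun x => Real.sqrt (f x + c))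
    (L : ℝ) (hL : 0 < L)
    (hLip : ∀ u v, ‖gradient f u - gradient f v‖ ≤ L * ‖u - v‖)
    (θstar : EuclideanSpace ℝ (Fin n)) (hmin : ∀ x, f θstar ≤ f x)
    (μ : ℝ) (hμ : 0 < μ)
    (hPL : ∀ x, μ * (f x - f θstar) ≤ 1 / 2 * ‖gradient f x‖ ^ 2)
    (η : ℝ) (hη : 0 < η)
    (θ : ℕ → EuclideanSpace ℝ (Fin n)) (r : ℕ → Fin n → ℝ)
    (hr0 : ∀ i, r 0 i = g (θ 0))
    (hr : ∀ k i, r (k + 1) i = r k i / (1 + 2 * η * (gradient g (θ k) i) ^ 2))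
    (hθ : ∀ k i, θ (k + 1) i = θ k i - 2 * η * r (k + 1) i * gradient g (θ k) i)
    (ηe : Fin n → ℕ → ℝ) (hηe : ∀ i j, ηe i j = η * r (j + 1) i / g (θ j))
    (k₀ k : ℕ) (hk : k₀ ≤ k)
    (hstep : ∀ i, ∀ j, k₀ ≤ j → j ≤ k → ηe i j ≤ 1 / L) :
    f (θ k) - f θstar
      ≤ Real.exp (-(μ * η / Real.sqrt (f (θ k₀) + c)) * ((k : ℝ) - (k₀ : ℝ))
            * Finset.univ.inf' (Finset.univ_nonempty_iff.mpr ⟨⟨0, hn⟩⟩)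
                (fun i => r k i))
        * (f (θ k₀) - f θstar) := by
  have hgpos : ∀ x, 0 < g x := fun x => hg ▸ Real.sqrt_pos.2 (hfc x)
  have hgradg : ∀ x, gradient g x = (2 * g x)⁻¹ • gradient f x := by
    intro x
    rw [hg]
    exact (grad_sqrt f hf c x (hfc x)).gradient
  have hgradgi : ∀ x i, gradient g x i = gradient f x i / (2 * g x) := by
    intro x i
    rw [hgradg x]
    simp [div_eq_inv_mul]
  -- positivity and monotonicity of r
  have hrpos : ∀ j i, 0 < r j i := by
    intro j
    induction j with
    | zero => intro i; rw [hr0 i]; exact hgpos _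
    | succ j ih =>
      intro i
      rw [hr j i]
      exact div_pos (ih i) (by positivity)
  have hrmono : ∀ j i, r (j + 1) i ≤ r j i := by
    intro j i
    rw [hr j i]
    exact div_le_self (hrpos j i).le (by nlinarith [sq_nonneg (gradient g (θ j) i)])
  have hrmono' : ∀ j j', j ≤ j' → ∀ i, r j' i ≤ r j i := by
    intro j j' hjj'
    induction j', hjj' using Nat.le_induction with
    | base => intro i; exact le_refl _
    | succ j' hle ih => intro i; exact (hrmono j' i).trans (ih i)
  -- componentwise step in terms of ∇f
  have hstep' : ∀ j i, θ (j + 1) i = θ j i - ηe i j * gradient f (θ j) i := by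
    intro j i
    rw [hθ j i, hgradgi, hηe]
    have := (hgpos (θ j)).ne'
    field_simp
  have hηepos : ∀ i j, 0 < ηe i j := by
    intro i j
    rw [hηe]
    exact div_pos (mul_pos hη (hrpos _ i)) (hgpos _)
  -- key one-step descent
  have key : ∀ j, k₀ ≤ j → j < k →
      f (θ (j + 1)) ≤ f (θ j) - ∑ i, ηe i j / 2 * (gradient f (θ j) i) ^ 2 := by
    intro j hj1 hj2
    have h := descent_lemma f hf L hL.le hLip (θ j) (θ (j + 1))
    have hdi : ∀ i, (θ (j + 1) - θ j) i = -(ηe i j * gradient f (θ j) i) := by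
      intro i
      show θ (j + 1) i - θ j i = _
      rw [hstep' j i]; ring
    have hinner : (inner ℝ (gradient f (θ j)) (θ (j + 1) - θ j) : ℝ)
        = -∑ i, ηe i j * (gradient f (θ j) i) ^ 2 := by
      simp only [PiLp.inner_apply, RCLike.inner_apply, conj_trivial]
      rw [← Finset.sum_neg_distrib]
      apply Finset.sum_congr rfl
      intro i _
      rw [hdi i]; ring
    have hnorm : ‖θ (j + 1) - θ j‖ ^ 2 = ∑ i, (ηe i j * gradient f (θ j) i) ^ 2 := by
      rw [← real_inner_self_eq_norm_sq]
      simp only [PiLp.inner_apply, RCLike.inner_apply, conj_trivial]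
      apply Finset.sum_congr rfl
      intro i _
      rw [hdi i]; ring
    rw [hinner, hnorm] at h
    have hsum : L / 2 * ∑ i, (ηe i j * gradient f (θ j) i) ^ 2
        ≤ ∑ i, ηe i j / 2 * (gradient f (θ j) i) ^ 2 := by
      rw [Finset.mul_sum]
      apply Finset.sum_le_sum
      intro i _
      have h1 : L * ηe i j ≤ 1 := by
        have := hstep i j hj1 hj2.le
        rw [le_div_iff₀ hL] at this
        linarith
      have h2 := (hηepos i j).le
      have h3 : L * ηe i j * (ηe i j * (gradient f (θ j) i) ^ 2)
          ≤ 1 * (ηe i j * (gradient f (θ j) i) ^ 2) :=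
        mul_le_mul_of_nonneg_right h1 (by positivity)
      nlinarith [h3]
    have h2S : (∑ i, ηe i j * (gradient f (θ j) i) ^ 2)
        = 2 * ∑ i, ηe i j / 2 * (gradient f (θ j) i) ^ 2 := by
      rw [Finset.mul_sum]
      exact Finset.sum_congr rfl fun i _ => by ring
    linarith
  have hsumnonneg : ∀ j, 0 ≤ ∑ i, ηe i j / 2 * (gradient f (θ j) i) ^ 2 := by
    intro j
    apply Finset.sum_nonneg
    intro i _
    have := (hηepos i j).le
    positivity
  -- monotonicity of f along iterates
  have mono : ∀ j, k₀ ≤ j → j ≤ k → f (θ j) ≤ f (θ k₀) := by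
    intro j hj1 hj2
    induction j with
    | zero => have : k₀ = 0 := Nat.le_zero.1 hj1; rw [this]
    | succ j ih =>
      rcases Nat.eq_or_lt_of_le hj1 with h | h
      · rw [h]
      · have hj : k₀ ≤ j := Nat.lt_succ_iff.1 h
        have := key j hj (by omega)
        have := hsumnonneg j
        have := ih hj (by omega)
        linarith
  -- minimal r at time k and lower bound on step sizes
  set m : ℝ := Finset.univ.inf' (Finset.univ_nonempty_iff.mpr ⟨⟨0, hn⟩⟩) (fun i => r k i)
    with hm
  have hmle : ∀ i, m ≤ r k i := fun i => Finset.inf'_le _ (Finset.mem_univ i)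
  have hmpos : 0 < m := by
    rw [hm, Finset.lt_inf'_iff]
    intro i _
    exact hrpos k i
  have hglek₀ : ∀ j, k₀ ≤ j → j ≤ k → g (θ j) ≤ g (θ k₀) := by
    intro j hj1 hj2
    rw [hg]
    exact Real.sqrt_le_sqrt (by have := mono j hj1 hj2; linarith)
  set b : ℝ := η * m / g (θ k₀) with hb
  have hbpos : 0 < b := div_pos (by positivity) (hgpos _)
  have hηelb : ∀ i j, k₀ ≤ j → j < k → b ≤ ηe i j := by
    intro i j hj1 hj2
    rw [hηe, hb]
    apply div_le_div₀ (mul_pos hη (hrpos (j + 1) i)).le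
    · have h1 : m ≤ r (j + 1) i := (hmle i).trans (hrmono' (j + 1) k (by omega) i)
      nlinarith
    · exact hgpos _
    · exact hglek₀ j hj1 hj2.le
  -- contraction step
  set q : ℝ := μ * b with hq
  have contraction : ∀ j, k₀ ≤ j → j < k →
      f (θ (j + 1)) - f θstar ≤ (1 - q) * (f (θ j) - f θstar) := by
    intro j hj1 hj2
    have hkey := key j hj1 hj2
    have hsum2 : b / 2 * ∑ i, (gradient f (θ j) i) ^ 2
        ≤ ∑ i, ηe i j / 2 * (gradient f (θ j) i) ^ 2 := by
      rw [Finset.mul_sum]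
      apply Finset.sum_le_sum
      intro i _
      have := hηelb i j hj1 hj2
      nlinarith [sq_nonneg (gradient f (θ j) i)]
    have hns : ‖gradient f (θ j)‖ ^ 2 = ∑ i, (gradient f (θ j) i) ^ 2 := by
      rw [← real_inner_self_eq_norm_sq]
      simp only [PiLp.inner_apply, RCLike.inner_apply, conj_trivial]
      exact Finset.sum_congr rfl fun i _ => (sq (gradient f (θ j) i)).symm ▸ by ring
    have hpl := hPL (θ j)
    rw [hns] at hpl
    have : μ * b * (f (θ j) - f θstar) ≤ b / 2 * ∑ i, (gradient f (θ j) i) ^ 2 := by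
      nlinarith
    rw [hq]
    linarith
  -- induction to get exponential rate
  have main : ∀ t, k₀ + t ≤ k →
      f (θ (k₀ + t)) - f θstar ≤ Real.exp (-q * t) * (f (θ k₀) - f θstar) := by
    intro t
    induction t with
    | zero => intro _; simp
    | succ t ih =>
      intro ht
      have ih' := ih (by omega)
      have hc' := contraction (k₀ + t) (by omega) (by omega)
      have hF : 0 ≤ f (θ (k₀ + t)) - f θstar := by have := hmin (θ (k₀ + t)); linarith
      have h1q : 1 - q ≤ Real.exp (-q) := by
        have := Real.add_one_le_exp (-q)
        linarith
      have h2 : f (θ (k₀ + (t + 1))) - f θstar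
          ≤ Real.exp (-q) * (f (θ (k₀ + t)) - f θstar) := by
        have h3 := mul_le_mul_of_nonneg_right h1q hF
        have he : k₀ + (t + 1) = (k₀ + t) + 1 := by omega
        rw [he]
        linarith
      have h4 : Real.exp (-q) * (f (θ (k₀ + t)) - f θstar)
          ≤ Real.exp (-q) * (Real.exp (-q * t) * (f (θ k₀) - f θstar)) :=
        mul_le_mul_of_nonneg_left ih' (Real.exp_nonneg _)
      have harg : -q + -q * (t : ℝ) = -q * ((t : ℝ) + 1) := by ring
      have h5 : Real.exp (-q) * (Real.exp (-q * t) * (f (θ k₀) - f θstar))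
          = Real.exp (-q * ((t : ℝ) + 1)) * (f (θ k₀) - f θstar) := by
        rw [← mul_assoc, ← Real.exp_add, harg]
      have hcast : ((t + 1 : ℕ) : ℝ) = (t : ℝ) + 1 := by push_cast; ring
      rw [hcast]
      linarith [h2, h4, h5.le]
  have hfin := main (k - k₀) (by omega)
  have hkk : k₀ + (k - k₀) = k := by omega
  rw [hkk] at hfin
  have hexp : -q * ((k : ℝ) - (k₀ : ℝ))
      = -(μ * η / Real.sqrt (f (θ k₀) + c)) * ((k : ℝ) - (k₀ : ℝ)) * m := by
    rw [hq, hb, hg]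
    field_simp
  have hcast : ((k - k₀ : ℕ) : ℝ) = (k : ℝ) - (k₀ : ℝ) := by
    push_cast [Nat.cast_sub hk]; ring
  rw [hcast] at hfin
  rw [hexp] at hfin
  exact hfin
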